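/- Let V be a finite set of n points in ℝ^d, with n odd and n ≥ 3, in which all pairwise distances between distinct points are distinct. If R^{(1)}(V) = (n−1)/2, then in the 1NN digraph of V exactly one point has indegree 0, exactly n−2 points have indegree 1, exactly one point has indegree 2, and no point has indegree 3 or more; i.e., Q_0^{(1)}(V) = 1, Q_1^{(1)}(V) = n−2, Q_2^{(1)}(V) = 1, and Q_j^{(1)}(V) = 0 for all j ≥ 3. -/

import Mathlib

/-- All pairwise distances between distinct points of `V` are distinct. -/
def DistinctDists {d : ℕ} (V : Set (EuclideanSpace ℝ (Fin d))) : Prop :=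
  ∀ u v u' v', u ∈ V → v ∈ V → u' ∈ V → v' ∈ V → u ≠ v → u' ≠ v' →
    dist u v = dist u' v' → (u = u' ∧ v = v') ∨ (u = v' ∧ v = u')

/-- `IsNN V v u` : `u` is the (unique) nearest neighbor of `v` in `V`, i.e. `NN(v) = u`. -/
def IsNN {d : ℕ} (V : Set (EuclideanSpace ℝ (Fin d))) (v u : EuclideanSpace ℝ (Fin d)) : Prop :=
  u ∈ V ∧ u ≠ v ∧ ∀ w ∈ V, w ≠ v → w ≠ u → dist v u < dist v w

/-- `R^{(1)}(V)`: the number of reflexive nearest-neighbor pairs of `V`. -/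
noncomputable def reflCount {d : ℕ} (V : Set (EuclideanSpace ℝ (Fin d))) : ℕ :=
  {p : Sym2 (EuclideanSpace ℝ (Fin d)) | ∃ u v, p = Sym2.mk u v ∧ u ≠ v ∧
    u ∈ V ∧ v ∈ V ∧ IsNN V u v ∧ IsNN V v u}.ncard

/-- The indegree of `v` in the 1NN digraph of `V`: the number of `u ∈ V` with `NN(u) = v`. -/
noncomputable def inDeg1 {d : ℕ} (V : Set (EuclideanSpace ℝ (Fin d)))
    (v : EuclideanSpace ℝ (Fin d)) : ℕ :=
  {u | u ∈ V ∧ IsNN V u v}.ncard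

/-- `Q_j^{(1)}(V)`: the number of points of `V` with indegree exactly `j` in the 1NN digraph. -/
noncomputable def Q1j {d : ℕ} (V : Set (EuclideanSpace ℝ (Fin d))) (j : ℕ) : ℕ :=
  {v | v ∈ V ∧ inDeg1 V v = j}.ncard

lemma exists_nn {d : ℕ} (V : Set (EuclideanSpace ℝ (Fin d))) (hfin : V.Finite)
    (h2 : 2 ≤ V.ncard) (hdist : DistinctDists V) {v : EuclideanSpace ℝ (Fin d)} (hv : v ∈ V) :
    ∃ u, IsNN V v u := by
  classical
  have hT : (hfin.toFinset.erase v).Nonempty := by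
    rw [← Finset.card_pos, Finset.card_erase_of_mem (hfin.mem_toFinset.2 hv)]
    have hc : hfin.toFinset.card = V.ncard := (Set.ncard_eq_toFinset_card _ hfin).symm
    omega
  obtain ⟨u, hu, hmin⟩ := Finset.exists_min_image _ (dist v) hT
  have huV : u ∈ V := hfin.mem_toFinset.1 (Finset.mem_of_mem_erase hu)
  have hune : u ≠ v := Finset.ne_of_mem_erase hu
  refine ⟨u, huV, hune, ?_⟩
  intro w hw hwv hwu
  have hle := hmin w (Finset.mem_erase.2 ⟨hwv, hfin.mem_toFinset.2 hw⟩)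
  rcases lt_or_eq_of_le hle with h | h
  · exact h
  · exfalso
    rcases hdist v u v w hv huV hv hw (Ne.symm hune) (Ne.symm hwv) h with ⟨_, h2'⟩ | ⟨h1', _⟩
    · exact hwu h2'.symm
    · exact hwv h1'.symm

lemma nn_unique {d : ℕ} {V : Set (EuclideanSpace ℝ (Fin d))} {v u u' : EuclideanSpace ℝ (Fin d)}
    (h1 : IsNN V v u) (h2 : IsNN V v u') : u = u' := by
  by_contra hne
  have a := h1.2.2 u' h2.1 h2.2.1 (Ne.symm hne)
  have b := h2.2.2 u h1.1 h1.2.1 hne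
  exact lt_irrefl _ (a.trans b)

/-- If `n` is odd and `R^{(1)}(V) = (n−1)/2`, then `Q_0^{(1)}(V) = 1`, `Q_1^{(1)}(V) = n−2`,
`Q_2^{(1)}(V) = 1`, and `Q_j^{(1)}(V) = 0` for all `j ≥ 3`. -/
theorem reflCount_max_odd_indegrees (d n : ℕ) (hodd : Odd n) (hn : 3 ≤ n)
    (V : Set (EuclideanSpace ℝ (Fin d))) (hfin : V.Finite) (hcard : V.ncard = n)
    (hdist : DistinctDists V)
    (hR : 2 * reflCount V = n - 1) :
    Q1j V 0 = 1 ∧ Q1j V 1 = n - 2 ∧ Q1j V 2 = 1 ∧ ∀ j, 3 ≤ j → Q1j V j = 0 := by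
  classical
  have h2 : 2 ≤ V.ncard := by omega
  have hnn : ∀ v ∈ V, ∃ u, IsNN V v u := fun v hv => exists_nn V hfin h2 hdist hv
  set f : EuclideanSpace ℝ (Fin d) → EuclideanSpace ℝ (Fin d) :=
    fun v => if h : ∃ u, IsNN V v u then h.choose else v with hfdef
  have hf : ∀ v ∈ V, IsNN V v (f v) := by
    intro v hv
    have h := hnn v hv
    simp only [hfdef, dif_pos h]
    exact h.choose_spec
  have hfV : ∀ v ∈ V, f v ∈ V := fun v hv => (hf v hv).1
  have hfne : ∀ v ∈ V, f v ≠ v := fun v hv => (hf v hv).2.1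
  have hiff : ∀ u ∈ V, ∀ v, IsNN V u v ↔ f u = v := by
    intro u hu v
    constructor
    · intro h; exact nn_unique (hf u hu) h
    · rintro rfl; exact hf u hu
  set S : Finset (EuclideanSpace ℝ (Fin d)) := hfin.toFinset with hSdef
  have hmem : ∀ x, x ∈ S ↔ x ∈ V := fun x => hfin.mem_toFinset
  have hScard : S.card = n := by
    rw [← hcard, Set.ncard_eq_toFinset_card _ hfin]
  -- indegree via fibers of f
  have hD : ∀ v, inDeg1 V v = (S.filter fun u => f u = v).card := by
    intro v
    have hset : {u | u ∈ V ∧ IsNN V u v} = ↑(S.filter fun u => f u = v) := by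
      ext u
      simp only [Set.mem_setOf_eq, Finset.coe_filter, Set.mem_setOf_eq, hmem]
      constructor
      · rintro ⟨hu, h⟩; exact ⟨hu, (hiff u hu v).1 h⟩
      · rintro ⟨hu, h⟩; exact ⟨hu, (hiff u hu v).2 h⟩
    rw [inDeg1, hset, Set.ncard_coe_finset]
  have hmapS : ∀ x ∈ S, f x ∈ S := fun x hx => (hmem _).2 (hfV x ((hmem _).1 hx))
  have hsumD : ∑ v ∈ S, (S.filter fun u => f u = v).card = n := by
    rw [← Finset.card_eq_sum_card_fiberwise hmapS, hScard]
  -- matched points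
  set Mfin : Finset (EuclideanSpace ℝ (Fin d)) := S.filter (fun v => f (f v) = v) with hMdef
  have hMmem : ∀ v, v ∈ Mfin ↔ v ∈ S ∧ f (f v) = v := fun v => Finset.mem_filter
  have hMclosed : ∀ v ∈ Mfin, f v ∈ Mfin := by
    intro v hv
    rcases (hMmem v).1 hv with ⟨hvS, hffv⟩
    exact (hMmem _).2 ⟨hmapS v hvS, by rw [hffv]⟩
  set Pfin : Finset (Sym2 (EuclideanSpace ℝ (Fin d))) :=
    Mfin.image (fun v => Sym2.mk v (f v)) with hPdef
  have hR' : reflCount V = Pfin.card := by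
    have hPset : {p : Sym2 (EuclideanSpace ℝ (Fin d)) | ∃ u v, p = Sym2.mk u v ∧ u ≠ v ∧
        u ∈ V ∧ v ∈ V ∧ IsNN V u v ∧ IsNN V v u} = ↑Pfin := by
      ext p
      simp only [Set.mem_setOf_eq, hPdef, Finset.coe_image, Set.mem_image, Finset.mem_coe]
      constructor
      · rintro ⟨u, v, rfl, hne, hu, hv, h1, h2⟩
        have hfu : f u = v := (hiff u hu v).1 h1
        have hfv : f v = u := (hiff v hv u).1 h2
        exact ⟨u, (hMmem u).2 ⟨(hmem u).2 hu, by rw [hfu, hfv]⟩, by rw [hfu]⟩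
      · rintro ⟨v, hv, rfl⟩
        rcases (hMmem v).1 hv with ⟨hvS, hffv⟩
        have hvV : v ∈ V := (hmem v).1 hvS
        exact ⟨v, f v, rfl, (hfne v hvV).symm, hvV, hfV v hvV, hf v hvV,
          (hiff (f v) (hfV v hvV) v).2 hffv⟩
    rw [reflCount, hPset, Set.ncard_coe_finset]
  have hMcard : Mfin.card = 2 * Pfin.card := by
    have hmap2 : ∀ v ∈ Mfin, Sym2.mk v (f v) ∈ Pfin := fun v hv =>
      Finset.mem_image_of_mem _ hv
    rw [Finset.card_eq_sum_card_fiberwise hmap2]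
    have hfib : ∀ p ∈ Pfin, (Mfin.filter (fun v => Sym2.mk v (f v) = p)).card = 2 := by
      intro p hp
      rcases Finset.mem_image.1 hp with ⟨u, hu, rfl⟩
      have huV : u ∈ V := (hmem u).1 ((hMmem u).1 hu).1
      have hffu : f (f u) = u := ((hMmem u).1 hu).2
      have hfune : f u ≠ u := hfne u huV
      have : Mfin.filter (fun v => Sym2.mk v (f v) = Sym2.mk u (f u)) = {u, f u} := by
        ext v
        simp only [Finset.mem_filter, Finset.mem_insert, Finset.mem_singleton]
        constructor
        · rintro ⟨hvM, hveq⟩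
          rcases (Sym2.mk_eq_mk_iff (p := (v, f v)) (q := (u, f u))).1 hveq with h | h
          · left; exact (Prod.ext_iff.1 h).1
          · right; exact (Prod.ext_iff.1 h).1
        · rintro (rfl | rfl)
          · exact ⟨hu, rfl⟩
          · refine ⟨hMclosed u hu, ?_⟩
            rw [hffu]
            exact Sym2.eq_swap
      rw [this, Finset.card_pair (Ne.symm hfune)]
    rw [Finset.sum_congr rfl hfib, Finset.sum_const, smul_eq_mul, mul_comm]
  have hMn : Mfin.card = n - 1 := by rw [hMcard, ← hR', hR]
  have hMsub : Mfin ⊆ S := Finset.filter_subset _ _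
  -- the unmatched point z
  have hCcard : (S \ Mfin).card = 1 := by
    rw [Finset.card_sdiff_of_subset hMsub, hScard, hMn]; omega
  obtain ⟨z, hzeq⟩ := Finset.card_eq_one.1 hCcard
  have hzS : z ∈ S := by
    have : z ∈ S \ Mfin := hzeq ▸ Finset.mem_singleton_self z
    exact (Finset.mem_sdiff.1 this).1
  have hzM : z ∉ Mfin := by
    have : z ∈ S \ Mfin := hzeq ▸ Finset.mem_singleton_self z
    exact (Finset.mem_sdiff.1 this).2
  have hMerase : ∀ v, v ∈ Mfin ↔ v ∈ S ∧ v ≠ z := by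
    intro v
    constructor
    · intro hv; exact ⟨hMsub hv, fun h => hzM (h ▸ hv)⟩
    · rintro ⟨hvS, hvz⟩
      by_contra hvM
      have : v ∈ S \ Mfin := Finset.mem_sdiff.2 ⟨hvS, hvM⟩
      rw [hzeq, Finset.mem_singleton] at this
      exact hvz this
  have hzV : z ∈ V := (hmem z).1 hzS
  set w : EuclideanSpace ℝ (Fin d) := f z with hwdef
  have hwS : w ∈ S := hmapS z hzS
  have hwM : w ∈ Mfin := (hMerase w).2 ⟨hwS, hfne z hzV⟩
  have hzw : z ≠ w := fun h => hzM (h ▸ hwM)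
  -- indegree lower bounds
  have hge1 : ∀ v ∈ Mfin, 1 ≤ (S.filter fun u => f u = v).card := by
    intro v hv
    rcases (hMmem v).1 hv with ⟨hvS, hffv⟩
    rw [Nat.one_le_iff_ne_zero, ← Nat.pos_iff_ne_zero, Finset.card_pos]
    exact ⟨f v, Finset.mem_filter.2 ⟨hmapS v hvS, hffv⟩⟩
  have hge2 : 2 ≤ (S.filter fun u => f u = w).card := by
    have hfwM : f w ∈ Mfin := hMclosed w hwM
    have hfwz : f w ≠ z := fun h => hzM (h ▸ hfwM)
    have hsub : ({f w, z} : Finset _) ⊆ S.filter fun u => f u = w := by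
      intro x hx
      rcases Finset.mem_insert.1 hx with rfl | hx
      · exact Finset.mem_filter.2 ⟨hMsub hfwM, ((hMmem w).1 hwM).2⟩
      · rw [Finset.mem_singleton] at hx
        subst hx
        exact Finset.mem_filter.2 ⟨hzS, rfl⟩
    calc 2 = ({f w, z} : Finset _).card := (Finset.card_pair hfwz).symm
      _ ≤ _ := Finset.card_le_card hsub
  -- the lower bound function
  set lb : EuclideanSpace ℝ (Fin d) → ℕ := fun v => if v = z then 0 else if v = w then 2 else 1
    with hlbdef
  have hlb_le : ∀ v ∈ S, lb v ≤ (S.filter fun u => f u = v).card := by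
    intro v hvS
    by_cases hvz : v = z
    · simp [hlbdef, hvz]
    by_cases hvw : v = w
    · subst hvw; simp only [hlbdef, if_neg hvz, if_pos rfl]; exact hge2
    · simp only [hlbdef, if_neg hvz, if_neg hvw]
      exact hge1 v ((hMerase v).2 ⟨hvS, hvz⟩)
  have hlb_sum : ∑ v ∈ S, lb v = n := by
    have hS' : S = insert z Mfin := by
      ext v
      simp only [Finset.mem_insert, hMerase]
      constructor
      · intro hv
        by_cases h : v = z
        · left; exact h
        · right; exact ⟨hv, h⟩
      · rintro (rfl | ⟨hv, _⟩)
        · exact hzS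
        · exact hv
    have hM' : Mfin = insert w (Mfin.erase w) := (Finset.insert_erase hwM).symm
    rw [hS', Finset.sum_insert hzM, hM', Finset.sum_insert (Finset.notMem_erase w _)]
    have h0 : lb z = 0 := by simp [hlbdef]
    have h2' : lb w = 2 := by simp [hlbdef, Ne.symm hzw]
    have h1 : ∀ v ∈ Mfin.erase w, lb v = 1 := by
      intro v hv
      have hvw : v ≠ w := Finset.ne_of_mem_erase hv
      have hvz : v ≠ z := ((hMerase v).1 (Finset.mem_of_mem_erase hv)).2
      simp [hlbdef, hvz, hvw]
    rw [h0, h2', Finset.sum_congr rfl h1, Finset.sum_const, smul_eq_mul, mul_one,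
      Finset.card_erase_of_mem hwM, hMn]
    omega
  have heq : ∀ v ∈ S, lb v = (S.filter fun u => f u = v).card := by
    refine (Finset.sum_eq_sum_iff_of_le hlb_le).1 ?_
    rw [hlb_sum, hsumD]
  -- exact indegrees
  have hDz : inDeg1 V z = 0 := by rw [hD, ← heq z hzS]; simp [hlbdef]
  have hDw : inDeg1 V w = 2 := by rw [hD, ← heq w hwS]; simp [hlbdef, Ne.symm hzw]
  have hD1 : ∀ v ∈ S, v ≠ z → v ≠ w → inDeg1 V v = 1 := by
    intro v hvS hvz hvw
    rw [hD, ← heq v hvS]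
    simp [hlbdef, hvz, hvw]
  -- Q1j as filter cards
  have hQ : ∀ j, Q1j V j = (S.filter fun v => inDeg1 V v = j).card := by
    intro j
    have hset : {v | v ∈ V ∧ inDeg1 V v = j} = ↑(S.filter fun v => inDeg1 V v = j) := by
      ext v
      simp only [Set.mem_setOf_eq, Finset.coe_filter, Set.mem_setOf_eq, hmem]
    rw [Q1j, hset, Set.ncard_coe_finset]
  have hle2 : ∀ v ∈ S, inDeg1 V v ≤ 2 := by
    intro v hvS
    by_cases hvz : v = z
    · rw [hvz, hDz]; omega
    by_cases hvw : v = w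
    · rw [hvw, hDw]
    · rw [hD1 v hvS hvz hvw]; omega
  refine ⟨?_, ?_, ?_, ?_⟩
  · rw [hQ]
    have : S.filter (fun v => inDeg1 V v = 0) = {z} := by
      ext v
      simp only [Finset.mem_filter, Finset.mem_singleton]
      constructor
      · rintro ⟨hvS, hv0⟩
        by_contra hvz
        by_cases hvw : v = w
        · rw [hvw, hDw] at hv0; omega
        · rw [hD1 v hvS hvz hvw] at hv0; omega
      · rintro rfl; exact ⟨hzS, hDz⟩
    rw [this, Finset.card_singleton]
  · rw [hQ]
    have : S.filter (fun v => inDeg1 V v = 1) = Mfin.erase w := by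
      ext v
      simp only [Finset.mem_filter, Finset.mem_erase, hMerase]
      constructor
      · rintro ⟨hvS, hv1⟩
        have hvz : v ≠ z := by rintro rfl; rw [hDz] at hv1; omega
        have hvw : v ≠ w := by rintro rfl; rw [hDw] at hv1; omega
        exact ⟨hvw, hvS, hvz⟩
      · rintro ⟨hvw, hvS, hvz⟩
        exact ⟨hvS, hD1 v hvS hvz hvw⟩
    rw [this, Finset.card_erase_of_mem hwM, hMn]
    omega
  · rw [hQ]
    have : S.filter (fun v => inDeg1 V v = 2) = {w} := by
      ext v
      simp only [Finset.mem_filter, Finset.mem_singleton]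
      constructor
      · rintro ⟨hvS, hv2⟩
        by_contra hvw
        by_cases hvz : v = z
        · rw [hvz, hDz] at hv2; omega
        · rw [hD1 v hvS hvz hvw] at hv2; omega
      · rintro rfl; exact ⟨hwS, hDw⟩
    rw [this, Finset.card_singleton]
  · intro j hj
    rw [hQ]
    have : S.filter (fun v => inDeg1 V v = j) = ∅ := by
      rw [Finset.filter_eq_empty_iff]
      intro v hvS h
      have := hle2 v hvS
      omega
    rw [this, Finset.card_empty]
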